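/- Under the S_R exchange relations, the traces t(k) = Σ_i b_{ii}(k) form a commutative family: for all real k₁ ≠ ±k₂, [t(k₁), t(k₂)] = 0 in A. -/

import Mathlib

open Matrix

set_option maxHeartbeats 1600000 in
/-- Under the S_R exchange relations, the traces `t(k) = Σ_i b_{ii}(k)` form a
commutative family: `[t(k₁), t(k₂)] = 0`. -/
theorem traces_commute (N : ℕ) (hN : 1 ≤ N) (g : ℝ) (hg : 0 < g)
    (A : Type*) [Ring A] [Algebra ℂ A]
    (b : ℝ → Fin N → Fin N → A)
    (hSR : ∀ k₁ k₂ : ℝ, k₁ ≠ k₂ → k₁ ≠ -k₂ → ∀ i j k l : Fin N,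
      b k₁ i j * b k₂ k l - b k₂ k l * b k₁ i j =
        ((Complex.I * (g : ℂ)) / ((k₁ : ℂ) - (k₂ : ℂ))) •
            (b k₂ k j * b k₁ i l - b k₁ k j * b k₂ i l)
        + ((Complex.I * (g : ℂ)) / ((k₁ : ℂ) + (k₂ : ℂ))) •
            ((if i = l then ∑ a : Fin N, b k₂ k a * b k₁ a j else 0)
              - (if k = j then ∑ a : Fin N, b k₁ i a * b k₂ a l else 0))
        - (((g : ℂ) ^ 2) / ((k₁ : ℂ) ^ 2 - (k₂ : ℂ) ^ 2)) •
            (if i = j then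
              ∑ a : Fin N, (b k₂ k a * b k₁ a l - b k₁ k a * b k₂ a l)
             else 0)) :
    ∀ k₁ k₂ : ℝ, k₁ ≠ k₂ → k₁ ≠ -k₂ →
      (∑ m : Fin N, b k₁ m m) * (∑ m : Fin N, b k₂ m m) -
        (∑ m : Fin N, b k₂ m m) * (∑ m : Fin N, b k₁ m m) = 0 := by
  intro k₁ k₂ h1 h2
  have hr2 : k₁ + k₂ ≠ 0 := by
    intro h; apply h2; linarith
  have hd1 : (k₁ : ℂ) - (k₂ : ℂ) ≠ 0 := by
    rw [sub_ne_zero]; exact_mod_cast h1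
  have hd2 : (k₁ : ℂ) + (k₂ : ℂ) ≠ 0 := by
    intro h
    apply hr2
    exact_mod_cast (by push_cast; exact h : ((k₁ + k₂ : ℝ) : ℂ) = 0)
  have hfact : (1 : ℂ) + (N : ℂ) * (Complex.I * (g : ℂ) / ((k₁ : ℂ) + (k₂ : ℂ)))
      - (g : ℂ) ^ 2 / ((k₁ : ℂ) ^ 2 - (k₂ : ℂ) ^ 2)
      - (Complex.I * (g : ℂ) / ((k₁ : ℂ) - (k₂ : ℂ)))
        * ((Complex.I * (g : ℂ) / ((k₁ : ℂ) - (k₂ : ℂ)))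
          + (Complex.I * (g : ℂ) / ((k₁ : ℂ) + (k₂ : ℂ)))
          - (N : ℂ) * ((g : ℂ) ^ 2 / ((k₁ : ℂ) ^ 2 - (k₂ : ℂ) ^ 2)))
      = (1 + (g : ℂ) ^ 2 / ((k₁ : ℂ) - (k₂ : ℂ)) ^ 2)
        * (1 + Complex.I * (N : ℂ) * (g : ℂ) / ((k₁ : ℂ) + (k₂ : ℂ))) := by
    rw [show (k₁ : ℂ) ^ 2 - (k₂ : ℂ) ^ 2
        = ((k₁ : ℂ) - (k₂ : ℂ)) * ((k₁ : ℂ) + (k₂ : ℂ)) from by ring]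
    generalize ((k₁ : ℂ) - (k₂ : ℂ)) = u
    generalize ((k₁ : ℂ) + (k₂ : ℂ)) = v
    linear_combination (-(g : ℂ) ^ 2 * (1 / (u * v) + 1 / u ^ 2)) * Complex.I_sq
  have hf1 : (1 : ℂ) + (g : ℂ) ^ 2 / ((k₁ : ℂ) - (k₂ : ℂ)) ^ 2 ≠ 0 := by
    have hr : k₁ - k₂ ≠ 0 := sub_ne_zero.mpr h1
    have hpos : (0 : ℝ) < 1 + g ^ 2 / (k₁ - k₂) ^ 2 := by positivity
    have h0 : ((1 + g ^ 2 / (k₁ - k₂) ^ 2 : ℝ) : ℂ) ≠ 0 := by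
      exact_mod_cast hpos.ne'
    convert h0 using 1
    push_cast
    ring
  have hf2 : (1 : ℂ) + Complex.I * (N : ℂ) * (g : ℂ) / ((k₁ : ℂ) + (k₂ : ℂ)) ≠ 0 := by
    have hr : k₁ - k₂ ≠ 0 := sub_ne_zero.mpr h1
    intro h
    have hrw : (1 : ℂ) + Complex.I * (N : ℂ) * (g : ℂ) / ((k₁ : ℂ) + (k₂ : ℂ))
        = 1 + (((N * g) / (k₁ + k₂) : ℝ) : ℂ) * Complex.I := by
      push_cast
      ring
    rw [hrw] at h
    have him := congrArg Complex.im h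
    simp only [Complex.add_im, Complex.one_im, Complex.mul_im, Complex.ofReal_re,
      Complex.ofReal_im, Complex.I_re, Complex.I_im, mul_one, mul_zero, zero_mul,
      add_zero, zero_add, Complex.zero_im] at him
    have hNpos : (0 : ℝ) < (N : ℝ) := by exact_mod_cast hN
    have hne : (N : ℝ) * g / (k₁ + k₂) ≠ 0 := by
      apply div_ne_zero _ hr2
      positivity
    exact hne him
  have hγ : (1 : ℂ) + (N : ℂ) * (Complex.I * (g : ℂ) / ((k₁ : ℂ) + (k₂ : ℂ)))
      - (g : ℂ) ^ 2 / ((k₁ : ℂ) ^ 2 - (k₂ : ℂ) ^ 2)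
      - (Complex.I * (g : ℂ) / ((k₁ : ℂ) - (k₂ : ℂ)))
        * ((Complex.I * (g : ℂ) / ((k₁ : ℂ) - (k₂ : ℂ)))
          + (Complex.I * (g : ℂ) / ((k₁ : ℂ) + (k₂ : ℂ)))
          - (N : ℂ) * ((g : ℂ) ^ 2 / ((k₁ : ℂ) ^ 2 - (k₂ : ℂ) ^ 2))) ≠ 0 := by
    rw [hfact]
    exact mul_ne_zero hf1 hf2
  clear hfact hf1 hf2
  set c : ℂ := Complex.I * (g : ℂ) / ((k₁ : ℂ) - (k₂ : ℂ)) with hc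
  set c' : ℂ := Complex.I * (g : ℂ) / ((k₁ : ℂ) + (k₂ : ℂ)) with hc'
  set e : ℂ := (g : ℂ) ^ 2 / ((k₁ : ℂ) ^ 2 - (k₂ : ℂ) ^ 2) with he
  -- abbreviations (not `set`, to keep rewriting transparent)
  have hNsmul : ∀ x : A, (∑ _m : Fin N, x) = (N : ℂ) • x := by
    intro x
    rw [Finset.sum_const, Finset.card_univ, Fintype.card_fin,
      ← Nat.cast_smul_eq_nsmul ℂ]
  -- ### Equation 1: sum the relation with i = j = m, k = l = n
  have D1 : (∑ m : Fin N, ∑ n : Fin N,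
        (b k₂ n m * b k₁ m n - b k₁ n m * b k₂ m n))
      = (∑ m : Fin N, ∑ n : Fin N, b k₂ n m * b k₁ m n)
        - (∑ m : Fin N, ∑ n : Fin N, b k₁ m n * b k₂ n m) := by
    simp only [Finset.sum_sub_distrib]
    rw [Finset.sum_comm (f := fun m n => b k₁ n m * b k₂ m n)]
  have D2 : (∑ m : Fin N, ∑ n : Fin N,
        ((if m = n then ∑ a : Fin N, b k₂ n a * b k₁ a m else 0)
          - (if n = m then ∑ a : Fin N, b k₁ m a * b k₂ a n else 0)))
      = (∑ m : Fin N, ∑ n : Fin N, b k₂ n m * b k₁ m n)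
        - (∑ m : Fin N, ∑ n : Fin N, b k₁ m n * b k₂ n m) := by
    simp only [Finset.sum_sub_distrib, Finset.sum_ite_eq, Finset.sum_ite_eq',
      Finset.mem_univ, if_true]
    congr 1
    exact Finset.sum_comm
  have D3 : (∑ m : Fin N, ∑ n : Fin N, ∑ a : Fin N,
        (b k₂ n a * b k₁ a n - b k₁ n a * b k₂ a n))
      = (N : ℂ) • ((∑ m : Fin N, ∑ n : Fin N, b k₂ n m * b k₁ m n)
        - (∑ m : Fin N, ∑ n : Fin N, b k₁ m n * b k₂ n m)) := by
    rw [hNsmul]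
    congr 1
    simp only [Finset.sum_sub_distrib]
    congr 1
    exact Finset.sum_comm
  have step2 : ∀ m n : Fin N,
      b k₁ m m * b k₂ n n - b k₂ n n * b k₁ m m =
        c • (b k₂ n m * b k₁ m n - b k₁ n m * b k₂ m n)
        + c' • ((if m = n then ∑ a : Fin N, b k₂ n a * b k₁ a m else 0)
            - (if n = m then ∑ a : Fin N, b k₁ m a * b k₂ a n else 0))
        - e • (∑ a : Fin N, (b k₂ n a * b k₁ a n - b k₁ n a * b k₂ a n)) := by
    intro m n
    simpa using hSR k₁ k₂ h1 h2 m m n n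
  have eq1 : (∑ m : Fin N, b k₁ m m) * (∑ m : Fin N, b k₂ m m)
      - (∑ m : Fin N, b k₂ m m) * (∑ m : Fin N, b k₁ m m)
      = (c + c' - (N : ℂ) * e) •
          ((∑ m : Fin N, ∑ n : Fin N, b k₂ n m * b k₁ m n)
            - (∑ m : Fin N, ∑ n : Fin N, b k₁ m n * b k₂ n m)) := by
    calc (∑ m : Fin N, b k₁ m m) * (∑ m : Fin N, b k₂ m m)
          - (∑ m : Fin N, b k₂ m m) * (∑ m : Fin N, b k₁ m m)
        = ∑ m : Fin N, ∑ n : Fin N,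
            (b k₁ m m * b k₂ n n - b k₂ n n * b k₁ m m) := by
          rw [Finset.sum_mul_sum, Finset.sum_mul_sum]
          rw [Finset.sum_comm (f := fun m n => b k₂ m m * b k₁ n n)]
          rw [← Finset.sum_sub_distrib]
          exact Finset.sum_congr rfl fun m _ => (Finset.sum_sub_distrib _ _).symm
      _ = ∑ m : Fin N, ∑ n : Fin N,
            (c • (b k₂ n m * b k₁ m n - b k₁ n m * b k₂ m n)
            + c' • ((if m = n then ∑ a : Fin N, b k₂ n a * b k₁ a m else 0)
                - (if n = m then ∑ a : Fin N, b k₁ m a * b k₂ a n else 0))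
            - e • (∑ a : Fin N, (b k₂ n a * b k₁ a n - b k₁ n a * b k₂ a n))) :=
          Finset.sum_congr rfl fun m _ => Finset.sum_congr rfl fun n _ => step2 m n
      _ = (∑ m : Fin N, ∑ n : Fin N,
              c • (b k₂ n m * b k₁ m n - b k₁ n m * b k₂ m n))
          + (∑ m : Fin N, ∑ n : Fin N,
              c' • ((if m = n then ∑ a : Fin N, b k₂ n a * b k₁ a m else 0)
                - (if n = m then ∑ a : Fin N, b k₁ m a * b k₂ a n else 0)))
          - (∑ m : Fin N, ∑ n : Fin N,
              e • (∑ a : Fin N, (b k₂ n a * b k₁ a n - b k₁ n a * b k₂ a n))) := by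
          simp only [Finset.sum_add_distrib, Finset.sum_sub_distrib]
      _ = c • ((∑ m : Fin N, ∑ n : Fin N, b k₂ n m * b k₁ m n)
            - (∑ m : Fin N, ∑ n : Fin N, b k₁ m n * b k₂ n m))
          + c' • ((∑ m : Fin N, ∑ n : Fin N, b k₂ n m * b k₁ m n)
            - (∑ m : Fin N, ∑ n : Fin N, b k₁ m n * b k₂ n m))
          - e • ((N : ℂ) • ((∑ m : Fin N, ∑ n : Fin N, b k₂ n m * b k₁ m n)
            - (∑ m : Fin N, ∑ n : Fin N, b k₁ m n * b k₂ n m))) := by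
          simp only [← Finset.smul_sum]
          rw [D1, D2, D3]
      _ = (c + c' - (N : ℂ) * e) •
            ((∑ m : Fin N, ∑ n : Fin N, b k₂ n m * b k₁ m n)
              - (∑ m : Fin N, ∑ n : Fin N, b k₁ m n * b k₂ n m)) := by
          module
  -- ### Equation 2: sum the relation with i = m, j = n, k = n, l = m
  have E1 : (∑ m : Fin N, ∑ n : Fin N,
        (b k₂ n n * b k₁ m m - b k₁ n n * b k₂ m m))
      = (∑ m : Fin N, b k₂ m m) * (∑ m : Fin N, b k₁ m m)
        - (∑ m : Fin N, b k₁ m m) * (∑ m : Fin N, b k₂ m m) := by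
    simp only [Finset.sum_sub_distrib, ← Finset.sum_mul, ← Finset.mul_sum]
  have E2 : (∑ m : Fin N, ∑ n : Fin N,
        ((∑ a : Fin N, b k₂ n a * b k₁ a n) - (∑ a : Fin N, b k₁ m a * b k₂ a m)))
      = (N : ℂ) • ((∑ m : Fin N, ∑ n : Fin N, b k₂ n m * b k₁ m n)
        - (∑ m : Fin N, ∑ n : Fin N, b k₁ m n * b k₂ n m)) := by
    simp only [Finset.sum_sub_distrib]
    rw [hNsmul, smul_sub]
    congr 1
    · congr 1
      exact Finset.sum_comm
    · calc (∑ m : Fin N, ∑ _n : Fin N, ∑ a : Fin N, b k₁ m a * b k₂ a m)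
          = ∑ m : Fin N, (N : ℂ) • (∑ a : Fin N, b k₁ m a * b k₂ a m) :=
            Finset.sum_congr rfl fun m _ => hNsmul _
        _ = (N : ℂ) • (∑ m : Fin N, ∑ n : Fin N, b k₁ m n * b k₂ n m) := by
            rw [Finset.smul_sum]
  have E3 : (∑ m : Fin N, ∑ n : Fin N,
        (if m = n then ∑ a : Fin N, (b k₂ n a * b k₁ a m - b k₁ n a * b k₂ a m) else 0))
      = (∑ m : Fin N, ∑ n : Fin N, b k₂ n m * b k₁ m n)
        - (∑ m : Fin N, ∑ n : Fin N, b k₁ m n * b k₂ n m) := by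
    simp only [Finset.sum_ite_eq, Finset.mem_univ, if_true]
    simp only [Finset.sum_sub_distrib]
    congr 1
    exact Finset.sum_comm
  have step2' : ∀ m n : Fin N,
      b k₁ m n * b k₂ n m - b k₂ n m * b k₁ m n =
        c • (b k₂ n n * b k₁ m m - b k₁ n n * b k₂ m m)
        + c' • ((∑ a : Fin N, b k₂ n a * b k₁ a n)
            - (∑ a : Fin N, b k₁ m a * b k₂ a m))
        - e • (if m = n then
            ∑ a : Fin N, (b k₂ n a * b k₁ a m - b k₁ n a * b k₂ a m) else 0) := by
    intro m n
    simpa using hSR k₁ k₂ h1 h2 m n n m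
  have eq2 : (∑ m : Fin N, ∑ n : Fin N, b k₁ m n * b k₂ n m)
      - (∑ m : Fin N, ∑ n : Fin N, b k₂ n m * b k₁ m n)
      = c • ((∑ m : Fin N, b k₂ m m) * (∑ m : Fin N, b k₁ m m)
          - (∑ m : Fin N, b k₁ m m) * (∑ m : Fin N, b k₂ m m))
        + c' • ((N : ℂ) • ((∑ m : Fin N, ∑ n : Fin N, b k₂ n m * b k₁ m n)
            - (∑ m : Fin N, ∑ n : Fin N, b k₁ m n * b k₂ n m)))
        - e • ((∑ m : Fin N, ∑ n : Fin N, b k₂ n m * b k₁ m n)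
            - (∑ m : Fin N, ∑ n : Fin N, b k₁ m n * b k₂ n m)) := by
    calc (∑ m : Fin N, ∑ n : Fin N, b k₁ m n * b k₂ n m)
          - (∑ m : Fin N, ∑ n : Fin N, b k₂ n m * b k₁ m n)
        = ∑ m : Fin N, ∑ n : Fin N,
            (b k₁ m n * b k₂ n m - b k₂ n m * b k₁ m n) := by
          simp only [Finset.sum_sub_distrib]
      _ = ∑ m : Fin N, ∑ n : Fin N,
            (c • (b k₂ n n * b k₁ m m - b k₁ n n * b k₂ m m)
            + c' • ((∑ a : Fin N, b k₂ n a * b k₁ a n)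
                - (∑ a : Fin N, b k₁ m a * b k₂ a m))
            - e • (if m = n then
                ∑ a : Fin N, (b k₂ n a * b k₁ a m - b k₁ n a * b k₂ a m) else 0)) :=
          Finset.sum_congr rfl fun m _ => Finset.sum_congr rfl fun n _ => step2' m n
      _ = (∑ m : Fin N, ∑ n : Fin N,
              c • (b k₂ n n * b k₁ m m - b k₁ n n * b k₂ m m))
          + (∑ m : Fin N, ∑ n : Fin N,
              c' • ((∑ a : Fin N, b k₂ n a * b k₁ a n)
                - (∑ a : Fin N, b k₁ m a * b k₂ a m)))
          - (∑ m : Fin N, ∑ n : Fin N,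
              e • (if m = n then
                ∑ a : Fin N, (b k₂ n a * b k₁ a m - b k₁ n a * b k₂ a m) else 0)) := by
          simp only [Finset.sum_add_distrib, Finset.sum_sub_distrib]
      _ = _ := by
          simp only [← Finset.smul_sum]
          rw [E1, E2, E3]
  -- ### Combine the two equations
  clear_value c c' e
  obtain ⟨P, hP⟩ : ∃ x : A, x = ∑ m : Fin N, ∑ n : Fin N, b k₂ n m * b k₁ m n :=
    ⟨_, rfl⟩
  obtain ⟨Q, hQ⟩ : ∃ x : A, x = ∑ m : Fin N, ∑ n : Fin N, b k₁ m n * b k₂ n m :=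
    ⟨_, rfl⟩
  obtain ⟨U, hU⟩ : ∃ x : A, x = ∑ m : Fin N, b k₁ m m := ⟨_, rfl⟩
  obtain ⟨V, hV⟩ : ∃ x : A, x = ∑ m : Fin N, b k₂ m m := ⟨_, rfl⟩
  rw [← hP, ← hQ] at eq1 eq2
  rw [← hU, ← hV] at eq1 eq2 ⊢
  have key : ((1 : ℂ) + (N : ℂ) * c' - e - c * (c + c' - (N : ℂ) * e)) • (P - Q)
      = 0 := by
    have hid : ((1 : ℂ) + (N : ℂ) * c' - e - c * (c + c' - (N : ℂ) * e)) • (P - Q)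
        = c • ((U * V - V * U) - (c + c' - (N : ℂ) * e) • (P - Q))
          - ((Q - P) - (c • (V * U - U * V)
              + c' • ((N : ℂ) • (P - Q)) - e • (P - Q))) := by
      module
    rw [hid, eq1, eq2]
    simp only [sub_self, smul_zero, sub_zero, zero_sub, neg_zero]
  have hW0 : P - Q = 0 := by
    have h := congrArg
      (fun x => ((1 : ℂ) + (N : ℂ) * c' - e - c * (c + c' - (N : ℂ) * e))⁻¹ • x) key
    simpa [smul_smul, inv_mul_cancel₀ hγ] using h
  rw [eq1, hW0, smul_zero]
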